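/- π³ = (250/(φ³·√(2+φ)))·Σ_{n=-∞}^{∞} 1/(1-10n)³, where φ = (1+√5)/2 and the sum over all integers n is interpreted as the limit of symmetric partial sums. -/

import Mathlib

open Real Filter

namespace PiAux

noncomputable def s1 : ℝ := Real.sin (π / 5)
noncomputable def s2 : ℝ := Real.sin (2 * π / 5)

lemma sqrt5_sq : Real.sqrt 5 ^ 2 = 5 := Real.sq_sqrt (by norm_num)
lemma cos1 : Real.cos (π / 5) = (1 + Real.sqrt 5) / 4 := Real.cos_pi_div_five
lemma cos2 : Real.cos (2 * π / 5) = (Real.sqrt 5 - 1) / 4 := by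
  have h := Real.cos_two_mul (π / 5)
  rw [show 2 * (π/5) = 2*π/5 by ring, cos1] at h
  rw [h]; linear_combination sqrt5_sq / 8
lemma s1_sq : s1 ^ 2 = (10 - 2 * Real.sqrt 5) / 16 := by
  have h := Real.sin_sq_add_cos_sq (π / 5)
  rw [cos1] at h
  have := sqrt5_sq
  unfold s1
  nlinarith
lemma s2_sq : s2 ^ 2 = (10 + 2 * Real.sqrt 5) / 16 := by
  have h := Real.sin_sq_add_cos_sq (2 * π / 5)
  rw [cos2] at h
  have := sqrt5_sq
  unfold s2
  nlinarith

lemma red (a : ℕ) (x : ℝ) (c : ℝ) (z : ℤ) (h : (a:ℝ) * x = (z:ℝ) + c/10) :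
    Real.sin (2*π*(a:ℝ)*x) = Real.sin (2*π*c/10) := by
  rw [show 2*π*(a:ℝ)*x = 2*π*c/10 + z*(2*π) by linear_combination (2*π)*h]
  exact Real.sin_add_int_mul_two_pi _ z

lemma v0 : Real.sin (2*π*(0:ℝ)/10) = 0 := by norm_num
lemma v1 : Real.sin (2*π*(1:ℝ)/10) = s1 := by rw [show 2*π*(1:ℝ)/10 = π/5 by ring]; rfl
lemma v2 : Real.sin (2*π*(2:ℝ)/10) = s2 := by rw [show 2*π*(2:ℝ)/10 = 2*π/5 by ring]; rfl
lemma v3 : Real.sin (2*π*(3:ℝ)/10) = s2 := by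
  rw [show 2*π*(3:ℝ)/10 = π - 2*π/5 by ring, Real.sin_pi_sub]; rfl
lemma v4 : Real.sin (2*π*(4:ℝ)/10) = s1 := by
  rw [show 2*π*(4:ℝ)/10 = π - π/5 by ring, Real.sin_pi_sub]; rfl
lemma v5 : Real.sin (2*π*(5:ℝ)/10) = 0 := by
  rw [show 2*π*(5:ℝ)/10 = π by ring, Real.sin_pi]
lemma v6 : Real.sin (2*π*(6:ℝ)/10) = -s1 := by
  rw [show 2*π*(6:ℝ)/10 = π/5 + π by ring, Real.sin_add_pi]; rfl
lemma v7 : Real.sin (2*π*(7:ℝ)/10) = -s2 := by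
  rw [show 2*π*(7:ℝ)/10 = 2*π/5 + π by ring, Real.sin_add_pi]; rfl
lemma v8 : Real.sin (2*π*(8:ℝ)/10) = -s2 := by
  rw [show 2*π*(8:ℝ)/10 = (π - 2*π/5) + π by ring, Real.sin_add_pi, Real.sin_pi_sub]; rfl
lemma v9 : Real.sin (2*π*(9:ℝ)/10) = -s1 := by
  rw [show 2*π*(9:ℝ)/10 = (π - π/5) + π by ring, Real.sin_add_pi, Real.sin_pi_sub]; rfl

lemma key (m : ℕ) :
    s1 * Real.sin (2*π*(m:ℝ)*(1/10)) + s2 * Real.sin (2*π*(m:ℝ)*(2/10))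
      + s2 * Real.sin (2*π*(m:ℝ)*(3/10)) + s1 * Real.sin (2*π*(m:ℝ)*(4/10))
    = 5/2 * (if m % 10 = 1 then 1 else if m % 10 = 9 then (-1:ℝ) else 0) := by
  obtain ⟨q, r, hr, rfl⟩ : ∃ q r, r < 10 ∧ m = 10*q + r :=
    ⟨m/10, m%10, Nat.mod_lt _ (by norm_num), by omega⟩
  interval_cases r
  · rw [red (10*q+0) (1/10) 0 ((q:ℤ)) (by push_cast; ring), red (10*q+0) (2/10) 0 (2*(q:ℤ)) (by push_cast; ring), red (10*q+0) (3/10) 0 (3*(q:ℤ)) (by push_cast; ring), red (10*q+0) (4/10) 0 (4*(q:ℤ)) (by push_cast; ring),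
      v0]
    norm_num [Nat.mul_add_mod]
    try ring
  · rw [red (10*q+1) (1/10) 1 ((q:ℤ)) (by push_cast; ring), red (10*q+1) (2/10) 2 (2*(q:ℤ)) (by push_cast; ring), red (10*q+1) (3/10) 3 (3*(q:ℤ)) (by push_cast; ring), red (10*q+1) (4/10) 4 (4*(q:ℤ)) (by push_cast; ring),
      v1, v2, v3, v4]
    norm_num [Nat.mul_add_mod]
    linear_combination 2*s1_sq + 2*s2_sq
  · rw [red (10*q+2) (1/10) 2 ((q:ℤ)) (by push_cast; ring), red (10*q+2) (2/10) 4 (2*(q:ℤ)) (by push_cast; ring), red (10*q+2) (3/10) 6 (3*(q:ℤ)) (by push_cast; ring), red (10*q+2) (4/10) 8 (4*(q:ℤ)) (by push_cast; ring),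
      v2, v4, v6, v8]
    norm_num [Nat.mul_add_mod]
    try ring
  · rw [red (10*q+3) (1/10) 3 ((q:ℤ)) (by push_cast; ring), red (10*q+3) (2/10) 6 (2*(q:ℤ)) (by push_cast; ring), red (10*q+3) (3/10) 9 (3*(q:ℤ)) (by push_cast; ring), red (10*q+3) (4/10) 2 (4*(q:ℤ)+1) (by push_cast; ring),
      v3, v6, v9, v2]
    norm_num [Nat.mul_add_mod]
    try ring
  · rw [red (10*q+4) (1/10) 4 ((q:ℤ)) (by push_cast; ring), red (10*q+4) (2/10) 8 (2*(q:ℤ)) (by push_cast; ring), red (10*q+4) (3/10) 2 (3*(q:ℤ)+1) (by push_cast; ring), red (10*q+4) (4/10) 6 (4*(q:ℤ)+1) (by push_cast; ring),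
      v4, v8, v2, v6]
    norm_num [Nat.mul_add_mod]
    try ring
  · rw [red (10*q+5) (1/10) 5 ((q:ℤ)) (by push_cast; ring), red (10*q+5) (2/10) 0 (2*(q:ℤ)+1) (by push_cast; ring), red (10*q+5) (3/10) 5 (3*(q:ℤ)+1) (by push_cast; ring), red (10*q+5) (4/10) 0 (4*(q:ℤ)+2) (by push_cast; ring),
      v5, v0]
    norm_num [Nat.mul_add_mod]
    try ring
  · rw [red (10*q+6) (1/10) 6 ((q:ℤ)) (by push_cast; ring), red (10*q+6) (2/10) 2 (2*(q:ℤ)+1) (by push_cast; ring), red (10*q+6) (3/10) 8 (3*(q:ℤ)+1) (by push_cast; ring), red (10*q+6) (4/10) 4 (4*(q:ℤ)+2) (by push_cast; ring),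
      v6, v2, v8, v4]
    norm_num [Nat.mul_add_mod]
    try ring
  · rw [red (10*q+7) (1/10) 7 ((q:ℤ)) (by push_cast; ring), red (10*q+7) (2/10) 4 (2*(q:ℤ)+1) (by push_cast; ring), red (10*q+7) (3/10) 1 (3*(q:ℤ)+2) (by push_cast; ring), red (10*q+7) (4/10) 8 (4*(q:ℤ)+2) (by push_cast; ring),
      v7, v4, v1, v8]
    norm_num [Nat.mul_add_mod]
    try ring
  · rw [red (10*q+8) (1/10) 8 ((q:ℤ)) (by push_cast; ring), red (10*q+8) (2/10) 6 (2*(q:ℤ)+1) (by push_cast; ring), red (10*q+8) (3/10) 4 (3*(q:ℤ)+2) (by push_cast; ring), red (10*q+8) (4/10) 2 (4*(q:ℤ)+3) (by push_cast; ring),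
      v8, v6, v4, v2]
    norm_num [Nat.mul_add_mod]
    try ring
  · rw [red (10*q+9) (1/10) 9 ((q:ℤ)) (by push_cast; ring), red (10*q+9) (2/10) 8 (2*(q:ℤ)+1) (by push_cast; ring), red (10*q+9) (3/10) 7 (3*(q:ℤ)+2) (by push_cast; ring), red (10*q+9) (4/10) 6 (4*(q:ℤ)+3) (by push_cast; ring),
      v9, v8, v7, v6]
    norm_num [Nat.mul_add_mod]
    linear_combination (-2)*s1_sq - 2*s2_sq

lemma bern3 (x : ℝ) :
    (Polynomial.map (algebraMap ℚ ℝ) (Polynomial.bernoulli 3)).eval x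
      = x^3 - 3/2*x^2 + 1/2*x := by
  simp_rw [Polynomial.bernoulli, Finset.sum_range_succ, Finset.sum_range_zero,
    Polynomial.map_add, Polynomial.map_zero, Polynomial.map_monomial,
    Polynomial.eval_add, Polynomial.eval_zero, Polynomial.eval_monomial]
  rw [bernoulli_one, bernoulli_eq_bernoulli'_of_ne_one zero_ne_one, bernoulli'_zero,
    bernoulli_eq_bernoulli'_of_ne_one (by decide : 2 ≠ 1), bernoulli'_two,
    bernoulli_eq_bernoulli'_of_ne_one (by decide : 3 ≠ 1), bernoulli'_three]
  push_cast
  norm_num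
  ring

lemma sine3 {x : ℝ} (hx : x ∈ Set.Icc (0:ℝ) 1) :
    HasSum (fun n : ℕ => 1 / (n:ℝ)^3 * Real.sin (2 * π * n * x))
      (2 * π^3 / 3 * (x^3 - 3/2*x^2 + 1/2*x)) := by
  have h := hasSum_one_div_nat_pow_mul_sin (k := 1) one_ne_zero hx
  rw [bern3] at h
  convert h using 2 <;> norm_num [Nat.factorial]
  ring

lemma s1_pos : 0 < s1 := Real.sin_pos_of_pos_of_lt_pi (by positivity) (by nlinarith [pi_pos])
lemma s2_pos : 0 < s2 := by
  apply Real.sin_pos_of_pos_of_lt_pi (by positivity)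
  nlinarith [pi_pos]

lemma s2_eq : s2 = s1 * ((1 + Real.sqrt 5) / 2) := by
  have h := Real.sin_two_mul (π / 5)
  rw [show 2 * (π/5) = 2*π/5 by ring, cos1] at h
  unfold s2 s1
  rw [h]; ring

noncomputable def g : ℕ → ℝ := fun m =>
  if m % 10 = 1 then 1/(m:ℝ)^3 else if m % 10 = 9 then -(1/(m:ℝ)^3) else 0

lemma hasSumNat : HasSum g (π^3 * (2*s1 + 3*s2)/125) := by
  have h1 := sine3 (x := 1/10) (by norm_num)
  have h2 := sine3 (x := 2/10) (by norm_num)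
  have h3 := sine3 (x := 3/10) (by norm_num)
  have h4 := sine3 (x := 4/10) (by norm_num)
  have h := ((((h1.mul_left s1).add (h2.mul_left s2)).add
      (h3.mul_left s2)).add (h4.mul_left s1)).mul_left (2/5)
  convert h using 1
  · rfl
  · funext m
    show g m = _
    have hk := key m
    unfold g
    split_ifs at hk ⊢ <;> linear_combination (-(2/5) * (1/(m:ℝ)^3)) * hk
  · norm_num
    ring

def u : ℤ → ℕ := fun n => (1 - 10*n).natAbs

lemma u_inj : Function.Injective u := by
  intro a b h
  unfold u at h
  omega

lemma hasSumZ : HasSum (fun n : ℤ => 1/((1:ℝ) - 10*n)^3) (π^3 * (2*s1 + 3*s2)/125) := by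
  have h0 : ∀ m ∉ Set.range u, g m = 0 := by
    intro m hm
    unfold g
    rw [if_neg, if_neg]
    · intro h9
      exact hm ⟨(m/10 : ℕ) + 1, by unfold u; omega⟩
    · intro h1
      exact hm ⟨-((m/10 : ℕ) : ℤ), by unfold u; omega⟩
  have H := (Function.Injective.hasSum_iff u_inj h0).mpr hasSumNat
  have hfun : (g ∘ u) = fun n : ℤ => 1/((1:ℝ) - 10*n)^3 := by
    funext n
    show g (u n) = _
    rcases le_or_gt n 0 with hn | hn
    · have h1 : (u n : ℤ) = 1 - 10*n := by unfold u; omega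
      have h2 : u n % 10 = 1 := by unfold u; omega
      unfold g
      rw [if_pos h2]
      have : ((u n : ℕ) : ℝ) = 1 - 10*(n:ℝ) := by exact_mod_cast h1
      rw [this]
    · have h1 : (u n : ℤ) = 10*n - 1 := by unfold u; omega
      have h2 : u n % 10 = 9 := by unfold u; omega
      unfold g
      rw [if_neg (by omega), if_pos h2]
      have h3 : ((u n : ℕ) : ℝ) = 10*(n:ℝ) - 1 := by exact_mod_cast h1
      have h4 : (1:ℝ) - 10*(n:ℝ) = -((u n : ℕ) : ℝ) := by rw [h3]; ring
      rw [h4, Odd.neg_pow (⟨1, by norm_num⟩ : Odd 3), div_neg]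
  rwa [hfun] at H

lemma hsqrt : Real.sqrt (2 + (1 + Real.sqrt 5)/2) = 2 * s2 := by
  rw [show (2:ℝ) + (1 + Real.sqrt 5)/2 = (2*s2)^2 by linear_combination (-4)*s2_sq]
  exact Real.sqrt_sq (by linarith [s2_pos])

lemma hid : ((1 + Real.sqrt 5)/2)^3 * (2*s2) = 2*(2*s1 + 3*s2) := by
  rw [s2_eq]
  linear_combination (s1*(Real.sqrt 5^2 + 4*Real.sqrt 5 + 11)/8) * sqrt5_sq

end PiAux

open PiAux in
theorem pi_cubed_golden_ten :
    ∃ S : ℝ,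
      Tendsto (fun N : ℕ => ∑ n ∈ Finset.Icc (-(N : ℤ)) (N : ℤ), 1 / ((1 : ℝ) - 10 * n) ^ 3)
        atTop (nhds S) ∧
      π ^ 3 = (250 / (((1 + Real.sqrt 5) / 2) ^ 3 *
        Real.sqrt (2 + (1 + Real.sqrt 5) / 2))) * S := by
  refine ⟨π^3 * (2*s1 + 3*s2)/125, ?_, ?_⟩
  · have hmono : Monotone (fun N : ℕ => Finset.Icc (-(N:ℤ)) (N:ℤ)) := by
      intro a b hab
      apply Finset.Icc_subset_Icc
      · exact neg_le_neg (by exact_mod_cast hab)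
      · exact_mod_cast hab
    have hten : Tendsto (fun N : ℕ => Finset.Icc (-(N:ℤ)) (N:ℤ)) atTop atTop :=
      tendsto_atTop_finset_of_monotone hmono
        (fun x => ⟨x.natAbs, by rw [Finset.mem_Icc]; omega⟩)
    have h2 : Tendsto (fun s : Finset ℤ => ∑ n ∈ s, 1/((1:ℝ) - 10*n)^3) atTop
        (nhds (π^3 * (2*s1 + 3*s2)/125)) := hasSumZ
    exact h2.comp hten
  · rw [hsqrt, hid]
    have hpos : (0:ℝ) < 2*s1 + 3*s2 := by nlinarith [s1_pos, s2_pos]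
    field_simp
    ring
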